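/- Let D ⊆ ℤ and let X_D ⊆ {0,1}^ℤ be the orbit closure of the indicator function χ_D of D under the shift ℤ-action (σ^m ω)(i) = ω(i + m), i.e. X_D is the closure of {σ^m χ_D : m ∈ ℤ} in the product space {0,1}^ℤ. Then the following are equivalent: (1) the ℤ-system X_D is tame, i.e. for every continuous f : X_D → ℝ the family {x ↦ f(σ^m x) : m ∈ ℤ} contains no independent sequence; (2) for every infinite subset L ⊆ ℤ there exist an infinite subset K ⊆ L and a countable set Y of ultrafilters on ℤ such that for every ultrafilter x on ℤ there exists y ∈ Y with: for all n ∈ K, the set n + D := {n + d : d ∈ D} belongs to x if and only if it belongs to y. -/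

import Mathlib

open scoped Classical

/-- A sequence `(f n)` of real-valued functions, regarded on the subset `Z` of its
domain, is *independent on `Z`* if there are reals `a < b` such that for all disjoint
finite sets `P, M ⊆ ℕ` the set `Z ∩ ⋂_{n ∈ P} {f n < a} ∩ ⋂_{n ∈ M} {f n > b}`
is nonempty. -/
def IsIndependentSeqOn {W : Type*} (Z : Set W) (f : ℕ → W → ℝ) : Prop :=
  ∃ a b : ℝ, a < b ∧ ∀ P M : Finset ℕ, Disjoint P M →
    (Z ∩ (⋂ n ∈ P, {z | f n z < a}) ∩ ⋂ n ∈ M, {z | b < f n z}).Nonempty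

/-- The shift `σ^m` on `{0,1}^ℤ`: `(σ^m ω)(i) = ω (i + m)`. -/
def shiftZ (m : ℤ) (ω : ℤ → Bool) : ℤ → Bool := fun i => ω (i + m)

/-- The indicator function `χ_D : ℤ → {0,1}` of `D ⊆ ℤ`. -/
noncomputable def chiD (D : Set ℤ) : ℤ → Bool := fun i => decide (i ∈ D)

/-- The subshift `X_D ⊆ {0,1}^ℤ`: the orbit closure of `χ_D` under the shift. -/
noncomputable def XD (D : Set ℤ) : Set (ℤ → Bool) :=
  closure {ω | ∃ m : ℤ, ω = shiftZ m (chiD D)}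


namespace NWAux

/-- `t` is an initial segment of `S` -/
def IsInitSeg (t : Finset ℕ) (S : Set ℕ) : Prop :=
  ↑t ⊆ S ∧ ∀ n ∈ S, n ∉ t → ∀ m ∈ t, m < n

def Acc' (B : Finset ℕ → Prop) (s : Finset ℕ) (R : Set ℕ) : Prop :=
  ∀ S : Set ℕ, S ⊆ R → S.Infinite → ∃ t, IsInitSeg t (↑s ∪ S) ∧ B t

def Rej (B : Finset ℕ → Prop) (s : Finset ℕ) (R : Set ℕ) : Prop :=
  ∀ R' : Set ℕ, R' ⊆ R → R'.Infinite → ¬ Acc' B s R'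

variable {B : Finset ℕ → Prop}

lemma Acc'.mono {s : Finset ℕ} {R R' : Set ℕ} (h : Acc' B s R) (hsub : R' ⊆ R) : Acc' B s R' :=
  fun S hS => h S (hS.trans hsub)

lemma Rej.mono {s : Finset ℕ} {R R' : Set ℕ} (h : Rej B s R) (hsub : R' ⊆ R) : Rej B s R' :=
  fun R'' h2 => h R'' (h2.trans hsub)

lemma infinite_gt {R : Set ℕ} (hR : R.Infinite) (n : ℕ) : {x ∈ R | n < x}.Infinite := by
  have : {x ∈ R | n < x} = R \ Set.Iic n := by
    ext x; simp [Set.mem_diff, not_le, and_comm]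
  rw [this]
  exact hR.diff (Set.finite_Iic n)

lemma exists_gt_of_infinite {R : Set ℕ} (hR : R.Infinite) (n : ℕ) : ∃ x ∈ R, n < x := by
  obtain ⟨x, hx⟩ := (infinite_gt hR n).nonempty
  exact ⟨x, hx.1, hx.2⟩

lemma decideAll (B : Finset ℕ → Prop) (F : Finset (Finset ℕ)) {R : Set ℕ} (hR : R.Infinite) :
    ∃ R', R' ⊆ R ∧ R'.Infinite ∧ ∀ t ∈ F, Acc' B t R' ∨ Rej B t R' := by
  induction F using Finset.induction_on with
  | empty => exact ⟨R, subset_rfl, hR, by simp⟩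
  | @insert t₀ F ht₀ ih =>
    obtain ⟨R₁, hR₁sub, hR₁inf, hR₁⟩ := ih
    by_cases h : ∃ R₂, R₂ ⊆ R₁ ∧ R₂.Infinite ∧ Acc' B t₀ R₂
    · obtain ⟨R₂, hsub, hinf, hacc⟩ := h
      refine ⟨R₂, hsub.trans hR₁sub, hinf, fun t ht => ?_⟩
      rcases Finset.mem_insert.mp ht with rfl | ht
      · exact Or.inl hacc
      · exact (hR₁ t ht).imp (fun h => h.mono hsub) (fun h => h.mono hsub)
    · refine ⟨R₁, hR₁sub, hR₁inf, fun t ht => ?_⟩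
      rcases Finset.mem_insert.mp ht with rfl | ht
      · exact Or.inr (fun R' hsub hinf hacc => h ⟨R', hsub, hinf, hacc⟩)
      · exact hR₁ t ht

lemma rej_step {s : Finset ℕ} {R : Set ℕ} (hrej : Rej B s R) :
    {n | n ∈ R ∧ Acc' B (insert n s) {x ∈ R | n < x}}.Finite := by
  by_contra h
  rw [← Set.not_infinite, not_not] at h
  set Bad := {n | n ∈ R ∧ Acc' B (insert n s) {x ∈ R | n < x}} with hBad
  have hBadR : Bad ⊆ R := fun n hn => hn.1
  refine hrej Bad hBadR h ?_
  intro S hS hSinf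
  have hSne : S.Nonempty := hSinf.nonempty
  set n := sInf S with hn
  have hnS : n ∈ S := Nat.sInf_mem hSne
  have hnBad : n ∈ Bad := hS hnS
  have hacc : Acc' B (insert n s) {x ∈ R | n < x} := hnBad.2
  have hS'sub : S \ {n} ⊆ {x ∈ R | n < x} := by
    intro x hx
    refine ⟨hBadR (hS hx.1), ?_⟩
    have h1 : n ≤ x := Nat.sInf_le hx.1
    have h2 : x ≠ n := hx.2
    omega
  have hS'inf : (S \ {n}).Infinite := hSinf.diff (Set.finite_singleton n)
  obtain ⟨t, hinit, hBt⟩ := hacc (S \ {n}) hS'sub hS'inf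
  have hset : (↑(insert n s) : Set ℕ) ∪ (S \ {n}) = ↑s ∪ S := by
    ext x
    simp only [Finset.coe_insert, Set.mem_union, Set.mem_insert_iff, Set.mem_diff,
      Set.mem_singleton_iff, Finset.mem_coe]
    constructor
    · rintro (⟨rfl | hx⟩ | ⟨hx, _⟩)
      · exact Or.inr hnS
      · exact Or.inl hx
      · exact Or.inr hx
    · rintro (hx | hx)
      · exact Or.inl (Or.inr hx)
      · by_cases hxn : x = n
        · exact Or.inl (Or.inl hxn)
        · exact Or.inr ⟨hx, hxn⟩
  rw [hset] at hinit
  exact ⟨t, hinit, hBt⟩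

/-- helper recursion principle -/
lemma exists_seq {α : Type*} (P : α → Prop) (Q : α → α → Prop) (a₀ : α) (h₀ : P a₀)
    (step : ∀ a, P a → ∃ b, P b ∧ Q a b) :
    ∃ f : ℕ → α, f 0 = a₀ ∧ (∀ k, P (f k)) ∧ ∀ k, Q (f k) (f (k + 1)) := by
  choose g hgP hgQ using step
  let f : ℕ → α := fun k => Nat.rec a₀ (fun _ a => if h : P a then g a h else a) k
  have hP : ∀ k, P (f k) := by
    intro k
    induction k with
    | zero => exact h₀
    | succ k ih =>
      show P (if h : P (f k) then g (f k) h else f k)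
      rw [dif_pos ih]
      exact hgP _ ih
  refine ⟨f, rfl, hP, fun k => ?_⟩
  have : f (k + 1) = if h : P (f k) then g (f k) h else f k := rfl
  rw [this, dif_pos (hP k)]
  exact hgQ _ (hP k)

end NWAux

namespace NWAux

theorem nashWilliams (B : Finset ℕ → Prop) (L : Set ℕ) (hL : L.Infinite) :
    ∃ M : Set ℕ, M ⊆ L ∧ M.Infinite ∧
      ((∀ S : Set ℕ, S ⊆ M → S.Infinite → ∃ t, IsInitSeg t S ∧ B t) ∨
       (∀ t : Finset ℕ, ↑t ⊆ M → ¬ B t)) := by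
  classical
  set Good : Finset ℕ × Set ℕ → Prop := fun st =>
    st.2 ⊆ L ∧ st.2.Infinite ∧ (∀ a ∈ st.1, ∀ r ∈ st.2, a < r) ∧
      ∀ t ∈ st.1.powerset, Acc' B t st.2 ∨ Rej B t st.2 with hGoodDef
  -- base state
  obtain ⟨R₀, hR₀L, hR₀inf, hR₀dec⟩ := decideAll B {∅} hL
  have hbase : Good (∅, R₀) := by
    refine ⟨hR₀L, hR₀inf, by simp, fun t ht => ?_⟩
    rw [Finset.mem_powerset, Finset.subset_empty] at ht
    exact hR₀dec t (by simp [ht])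
  -- step
  have hstep : ∀ st, Good st → ∃ st', Good st' ∧
      (st'.1 = insert (sInf st.2) st.1 ∧ st'.2 ⊆ {x ∈ st.2 | sInf st.2 < x}) := by
    rintro ⟨s, R⟩ ⟨hRL, hRinf, hbnd, _⟩
    set n := sInf R with hn
    have hR₁inf : {x ∈ R | n < x}.Infinite := infinite_gt hRinf n
    obtain ⟨R', hR'sub, hR'inf, hR'dec⟩ := decideAll B (insert n s).powerset hR₁inf
    refine ⟨(insert n s, R'), ⟨?_, hR'inf, ?_, fun t ht => hR'dec t ht⟩, rfl, hR'sub⟩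
    · exact (hR'sub.trans (Set.sep_subset _ _)).trans hRL
    · intro a ha r hr
      rcases Finset.mem_insert.mp ha with rfl | ha
      · exact (hR'sub hr).2
      · exact hbnd a ha r (hR'sub hr).1
  obtain ⟨f, hf0, hGood, hQ⟩ := exists_seq Good _ _ hbase hstep
  set R : ℕ → Set ℕ := fun k => (f k).2 with hR
  set s : ℕ → Finset ℕ := fun k => (f k).1 with hs
  set m : ℕ → ℕ := fun k => sInf (R k) with hm
  have hmm : ∀ k, m k ∈ R k := fun k => Nat.sInf_mem (hGood k).2.1.nonempty
  have hQ1 : ∀ k, s (k + 1) = insert (m k) (s k) := fun k => (hQ k).1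
  have hQ2 : ∀ k, R (k + 1) ⊆ {x ∈ R k | m k < x} := fun k => (hQ k).2
  have hRchain : ∀ k j, k ≤ j → R j ⊆ R k := by
    intro k j hkj
    induction j, hkj using Nat.le_induction with
    | base => exact subset_rfl
    | succ j hkj ih => exact ((hQ2 j).trans (Set.sep_subset _ _)).trans ih
  have hmono : StrictMono m := by
    apply strictMono_nat_of_lt_succ
    intro k
    exact (hQ2 k (hmm (k + 1))).2
  have hscoe : ∀ k, (↑(s k) : Set ℕ) = m '' Set.Iio k := by
    intro k
    induction k with
    | zero =>
      have h1 : s 0 = ∅ := by show (f 0).1 = ∅; rw [hf0]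
      have h2 : Set.Iio 0 = (∅ : Set ℕ) := by ext x; simp
      rw [h1, h2]; simp
    | succ k ih =>
      rw [hQ1 k]
      have : Set.Iio (k + 1) = insert k (Set.Iio k) := by ext x; simp
      rw [this, Set.image_insert_eq, Finset.coe_insert, ih]
  have hmemR : ∀ k j, k ≤ j → m j ∈ R k := fun k j h => hRchain k j h (hmm j)
  set M₀ : Set ℕ := Set.range m with hM₀
  have hM₀L : M₀ ⊆ L := by
    rintro _ ⟨j, rfl⟩
    exact (hGood 0).1 (hmemR 0 j (Nat.zero_le j))
  have hM₀inf : M₀.Infinite := Set.infinite_range_of_injective hmono.injective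
  set TailM : ℕ → Set ℕ := fun a => {x ∈ M₀ | a < x} with hTailM
  have hTail_inf : ∀ a, (TailM a).Infinite := fun a => infinite_gt hM₀inf a
  have hTail_sub : ∀ k, TailM (m k) ⊆ R (k + 1) := by
    rintro k x ⟨⟨j, rfl⟩, hgt⟩
    have : k < j := hmono.lt_iff_lt.mp hgt
    exact hmemR (k + 1) j this
  have decidedM : ∀ t : Finset ℕ, ↑t ⊆ M₀ → ∀ a ∈ t, (∀ i ∈ t, i ≤ a) →
      Acc' B t (TailM a) ∨ Rej B t (TailM a) := by
    intro t htM a hat hbound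
    obtain ⟨k, rfl⟩ := htM hat
    have htsub : t ⊆ s (k + 1) := by
      intro i hi
      obtain ⟨j, rfl⟩ := htM hi
      have : j ≤ k := hmono.le_iff_le.mp (hbound _ hi)
      have hj : m j ∈ m '' Set.Iio (k + 1) := ⟨j, Set.mem_Iio.mpr (by omega), rfl⟩
      rw [← hscoe (k + 1)] at hj
      exact_mod_cast hj
    have hdec := (hGood (k + 1)).2.2.2 t (Finset.mem_powerset.mpr htsub)
    exact hdec.imp (fun h => h.mono (hTail_sub k)) (fun h => h.mono (hTail_sub k))
  -- Stage 2 : decide the empty set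
  have hM₀R0 : M₀ ⊆ R 0 := by rintro _ ⟨j, rfl⟩; exact hmemR 0 j (Nat.zero_le j)
  have hdec0 := (hGood 0).2.2.2 ∅ (by simp)
  rcases hdec0 with hacc0 | hrej0
  · -- alternative (I) with M₀
    refine ⟨M₀, hM₀L, hM₀inf, Or.inl ?_⟩
    intro S hSM hSinf
    obtain ⟨t, hinit, hBt⟩ := (hacc0.mono hM₀R0) S hSM hSinf
    rw [Finset.coe_empty, Set.empty_union] at hinit
    exact ⟨t, hinit, hBt⟩
  · -- alternative (II): build an all-rejecting set
    have hrej0M : Rej B ∅ M₀ := hrej0.mono hM₀R0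
    set Good3 : Finset ℕ → Prop := fun c =>
      ↑c ⊆ M₀ ∧ c.Nonempty ∧ ∀ t ∈ c.powerset, Rej B t (TailM (c.sup id)) with hGood3Def
    have hbase3 : ∃ c₀, Good3 c₀ := by
      have hBadfin : {n | n ∈ M₀ ∧ Acc' B (insert n ∅) {x ∈ M₀ | n < x}}.Finite :=
        rej_step hrej0M
      obtain ⟨n₀, hn₀⟩ := (hM₀inf.diff hBadfin).nonempty
      have hn₀M : n₀ ∈ M₀ := hn₀.1
      refine ⟨{n₀}, by simpa using hn₀M, Finset.singleton_nonempty n₀, ?_⟩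
      intro t ht
      rw [Finset.mem_powerset, Finset.subset_singleton_iff] at ht
      rw [Finset.sup_singleton]
      rcases ht with rfl | rfl
      · exact hrej0M.mono (Set.sep_subset _ _)
      · have hnacc : ¬ Acc' B {n₀} (TailM n₀) := by
          intro hacc
          exact hn₀.2 ⟨hn₀M, by simpa using hacc⟩
        have := decidedM {n₀} (by simpa using hn₀M) n₀ (Finset.mem_singleton_self n₀)
          (by simp)
        simpa [id] using this.resolve_left hnacc
    obtain ⟨c₀, hc₀⟩ := hbase3
    have hstep3 : ∀ c, Good3 c → ∃ c', Good3 c' ∧ (c ⊆ c' ∧ c.sup id < c'.sup id) := by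
      intro c hc
      obtain ⟨hcM, hcne, hcrej⟩ := hc
      set a := c.sup id with ha
      have hBadU : (⋃ t ∈ c.powerset,
          {n | n ∈ TailM a ∧ Acc' B (insert n t) {x ∈ TailM a | n < x}}).Finite := by
        apply Set.Finite.biUnion (c.powerset.finite_toSet)
        intro t ht
        exact rej_step (hcrej t ht)
      obtain ⟨nn, hnn⟩ := ((hTail_inf a).diff hBadU).nonempty
      have hnnM : nn ∈ M₀ := hnn.1.1
      have hnngt : a < nn := hnn.1.2
      refine ⟨insert nn c, ⟨?_, ⟨nn, Finset.mem_insert_self _ _⟩, ?_⟩, Finset.subset_insert _ _, ?_⟩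
      · rw [Finset.coe_insert]
        exact Set.insert_subset hnnM hcM
      · -- rejections for all subsets of insert nn c
        have hsup : (insert nn c).sup id = nn := by
          rw [Finset.sup_insert]
          exact sup_eq_left.mpr (le_of_lt hnngt)
        rw [hsup]
        intro t ht
        rw [Finset.mem_powerset] at ht
        by_cases hnt : nn ∈ t
        · set t₀ := t.erase nn with ht₀
          have ht₀c : t₀ ⊆ c := by
            intro i hi
            have hit := Finset.mem_of_mem_erase hi
            have hine := Finset.ne_of_mem_erase hi
            rcases Finset.mem_insert.mp (ht hit) with h | h
            · exact absurd h hine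
            · exact h
          have hnBad : ¬ (nn ∈ TailM a ∧ Acc' B (insert nn t₀) {x ∈ TailM a | nn < x}) := by
            intro hmem
            exact hnn.2 (Set.mem_biUnion (Finset.mem_powerset.mpr ht₀c) hmem)
          have hnacc : ¬ Acc' B (insert nn t₀) {x ∈ TailM a | nn < x} := by
            intro hacc
            exact hnBad ⟨⟨hnnM, hnngt⟩, hacc⟩
          have heq : {x ∈ TailM a | nn < x} = TailM nn := by
            ext x
            simp only [Set.mem_setOf_eq, hTailM, Set.mem_sep_iff]
            constructor
            · rintro ⟨⟨h1, _⟩, h3⟩; exact ⟨h1, h3⟩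
            · rintro ⟨h1, h2⟩; exact ⟨⟨h1, by omega⟩, h2⟩
          rw [heq, Finset.insert_erase hnt] at hnacc
          have htM : ↑t ⊆ M₀ := by
            intro i hi
            rcases Finset.mem_insert.mp (ht hi) with h | h
            · exact h ▸ hnnM
            · exact hcM h
          have hbound : ∀ i ∈ t, i ≤ nn := by
            intro i hi
            rcases Finset.mem_insert.mp (ht hi) with h | h
            · omega
            · have : i ≤ a := Finset.le_sup (f := id) h
              omega
          have := decidedM t htM nn hnt hbound
          exact this.resolve_left hnacc
        · have htc : t ⊆ c := by
            intro i hi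
            rcases Finset.mem_insert.mp (ht hi) with h | h
            · exact absurd (h ▸ hi) (h ▸ hnt)
            · exact h
          have hTsub : TailM nn ⊆ TailM a := by
            rintro x ⟨hx1, hx2⟩
            exact ⟨hx1, by omega⟩
          exact (hcrej t (Finset.mem_powerset.mpr htc)).mono hTsub
      · have hsup : (insert nn c).sup id = nn := by
          rw [Finset.sup_insert]
          exact sup_eq_left.mpr (le_of_lt hnngt)
        rw [hsup]; exact hnngt
    obtain ⟨c, hcc0, hGood3, hQ3⟩ := exists_seq Good3 _ _ hc₀ hstep3
    have hchain3 : ∀ k j, k ≤ j → c k ⊆ c j := by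
      intro k j hkj
      induction j, hkj using Nat.le_induction with
      | base => exact subset_rfl
      | succ j hkj ih => exact ih.trans (hQ3 j).1
    set N : Set ℕ := ⋃ k, ↑(c k) with hN
    have hNM₀ : N ⊆ M₀ := by
      intro x hx
      obtain ⟨k, hk⟩ := Set.mem_iUnion.mp hx
      exact (hGood3 k).1 hk
    have hσ : StrictMono (fun k => (c k).sup id) :=
      strictMono_nat_of_lt_succ (fun k => (hQ3 k).2)
    have hNinf : N.Infinite := by
      apply Set.infinite_of_forall_exists_gt
      intro x
      refine ⟨(c (x + 1)).sup id, ?_, ?_⟩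
      · have hne := (hGood3 (x + 1)).2.1
        obtain ⟨b, hb, hbeq⟩ := Finset.exists_mem_eq_sup (c (x + 1)) hne id
        rw [hbeq]
        exact Set.mem_iUnion.mpr ⟨x + 1, hb⟩
      · have : x + 1 ≤ (c (x + 1)).sup id := hσ.le_apply
        omega
    refine ⟨N, hNM₀.trans hM₀L, hNinf, Or.inr ?_⟩
    have hsome : ∀ t : Finset ℕ, ↑t ⊆ N → ∃ k, t ⊆ c k := by
      intro t
      induction t using Finset.induction_on with
      | empty => exact fun _ => ⟨0, Finset.empty_subset _⟩
      | @insert i t hit ih =>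
        intro htN
        obtain ⟨k₁, hk₁⟩ := ih ((Finset.coe_subset.mpr (Finset.subset_insert i t)).trans htN)
        have hiN : i ∈ N := htN (Finset.mem_insert_self i t)
        obtain ⟨k₂, hk₂⟩ := Set.mem_iUnion.mp hiN
        refine ⟨max k₁ k₂, Finset.insert_subset ?_ (hk₁.trans (hchain3 _ _ (le_max_left _ _)))⟩
        exact hchain3 k₂ (max k₁ k₂) (le_max_right _ _) hk₂
    intro t htN hBt
    obtain ⟨k, htk⟩ := hsome t htN
    have hrej := (hGood3 k).2.2 t (Finset.mem_powerset.mpr htk)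
    apply hrej (TailM ((c k).sup id)) subset_rfl (hTail_inf _)
    -- B t gives acceptance
    intro S hS hSinf
    refine ⟨t, ⟨Set.subset_union_left, ?_⟩, hBt⟩
    intro n hn hnt m' hm'
    have hnS : n ∈ S := by
      rcases hn with hn | hn
      · exact absurd (by exact_mod_cast hn) hnt
      · exact hn
    have h1 : (c k).sup id < n := (hS hnS).2
    have h2 : m' ≤ (c k).sup id := Finset.le_sup (f := id) (htk hm')
    omega

end NWAux

namespace RosAux
open NWAux

def AltInter (A : ℕ → Set ℤ) : List ℕ → Set ℤ
  | [] => Set.univ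
  | [_] => Set.univ
  | a :: b :: l => (A a ∩ (A b)ᶜ) ∩ AltInter A l

@[simp] lemma altInter_nil (A : ℕ → Set ℤ) : AltInter A [] = Set.univ := rfl
@[simp] lemma altInter_single (A : ℕ → Set ℤ) (a : ℕ) : AltInter A [a] = Set.univ := rfl
@[simp] lemma altInter_cons (A : ℕ → Set ℤ) (a b : ℕ) (l : List ℕ) :
    AltInter A (a :: b :: l) = (A a ∩ (A b)ᶜ) ∩ AltInter A l := rfl

def BadPat (A : ℕ → Set ℤ) (t : Finset ℕ) : Prop :=
  ∃ ℓ : List ℕ, ℓ.Pairwise (· < ·) ∧ ℓ.toFinset = t ∧ AltInter A ℓ = ∅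

/-- alternating intersections of `x`-large sets are `x`-large -/
lemma altmem (x : Ultrafilter ℤ) (A : ℕ → Set ℤ) :
    ∀ (j : ℕ) (r : ℕ → ℕ), (∀ i, i % 2 = 0 → A (r i) ∈ x) →
      (∀ i, i % 2 = 1 → (A (r i))ᶜ ∈ x) → AltInter A ((List.range j).map r) ∈ x := by
  intro j
  induction j using Nat.strong_induction_on with
  | _ j ih =>
    match j with
    | 0 =>
      intro r _ _
      simp only [List.range_zero, List.map_nil, altInter_nil]
      exact Filter.univ_mem
    | 1 =>
      intro r _ _
      simp only [show List.range 1 = [0] from rfl, List.map_cons, List.map_nil, altInter_single]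
      exact Filter.univ_mem
    | (n + 2) =>
      intro r h0 h1
      have hid : (List.range (n + 2)).map r =
          r 0 :: r 1 :: (List.range n).map (fun i => r (i + 2)) := by
        rw [List.range_succ_eq_map, List.range_succ_eq_map]
        simp [List.map_map, Function.comp_def]
      rw [hid, altInter_cons]
      refine Filter.inter_mem (Filter.inter_mem (h0 0 rfl) (h1 1 rfl)) ?_
      exact ih n (by omega) (fun i => r (i + 2)) (fun i hi => h0 (i + 2) (by omega))
        (fun i hi => h1 (i + 2) (by omega))

theorem rosenthal (A : ℕ → Set ℤ) :
    (∃ I : Set ℕ, I.Infinite ∧ ∀ P M : Finset ℕ, ↑P ⊆ I → ↑M ⊆ I → Disjoint P M →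
        ((⋂ n ∈ P, A n) ∩ ⋂ n ∈ M, (A n)ᶜ).Nonempty) ∨
    (∃ I : Set ℕ, I.Infinite ∧ ∀ x : Ultrafilter ℤ,
        {n | n ∈ I ∧ A n ∈ x}.Finite ∨ {n | n ∈ I ∧ A n ∉ x}.Finite) := by
  classical
  obtain ⟨M, _, hMinf, hcase⟩ := nashWilliams (BadPat A) Set.univ Set.infinite_univ
  rcases hcase with hI | hII
  · -- convergence case
    right
    refine ⟨M, hMinf, ?_⟩
    intro x
    by_contra hcon
    push_neg at hcon
    obtain ⟨hτ, hτ'⟩ := hcon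
    have hτinf : {n | n ∈ M ∧ A n ∈ x}.Infinite := hτ
    have hτ'inf : {n | n ∈ M ∧ A n ∉ x}.Infinite := hτ'
    set τ := {n | n ∈ M ∧ A n ∈ x} with hτdef
    set τ' := {n | n ∈ M ∧ A n ∉ x} with hτ'def
    set target : ℕ → Set ℕ := fun i => if i % 2 = 0 then τ else τ' with htargetdef
    have htarget_inf : ∀ i, (target i).Infinite := by
      intro i; rw [htargetdef]; dsimp only; split <;> assumption
    have htarget_M : ∀ i, target i ⊆ M := by
      intro i; rw [htargetdef]; dsimp only; split
      · exact fun n hn => hn.1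
      · exact fun n hn => hn.1
    set q : ℕ → ℕ := fun n =>
      Nat.rec (sInf τ) (fun i qi => sInf {y ∈ target (i + 1) | qi < y}) n with hqdef
    have hq0 : q 0 ∈ target 0 := by
      have h00 : target 0 = τ := by simp [htargetdef]
      rw [h00]
      exact Nat.sInf_mem hτinf.nonempty
    have hqstep : ∀ i, q (i + 1) ∈ target (i + 1) ∧ q i < q (i + 1) := by
      intro i
      have hmem : q (i + 1) ∈ {y ∈ target (i + 1) | q i < y} :=
        Nat.sInf_mem (infinite_gt (htarget_inf (i + 1)) (q i)).nonempty
      exact ⟨hmem.1, hmem.2⟩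
    have hqmem : ∀ i, q i ∈ target i := by
      intro i; cases i with
      | zero => exact hq0
      | succ i => exact (hqstep i).1
    have hqmono : StrictMono q := strictMono_nat_of_lt_succ fun i => (hqstep i).2
    set S := Set.range q with hSdef
    have hSsub : S ⊆ M := by rintro _ ⟨i, rfl⟩; exact htarget_M i (hqmem i)
    have hSinf : S.Infinite := Set.infinite_range_of_injective hqmono.injective
    obtain ⟨t, ⟨htS, hinit⟩, ℓ, hℓsorted, hℓt, hℓempty⟩ := hI S hSsub hSinf
    -- t = q '' (Iio j)
    set J := {i | q i ∈ t} with hJdef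
    have hJfin : J.Finite := t.finite_toSet.preimage (hqmono.injective.injOn)
    have hJdown : ∀ i' i, i' ≤ i → i ∈ J → i' ∈ J := by
      intro i' i hle hi
      by_contra hno
      have := hinit (q i') ⟨i', rfl⟩ (by exact_mod_cast hno) (q i) (by exact_mod_cast hi)
      have h2 : q i' ≤ q i := hqmono.monotone hle
      omega
    obtain ⟨j, hJ⟩ : ∃ j, J = Set.Iio j := by
      have hne : Jᶜ.Nonempty := hJfin.infinite_compl.nonempty
      refine ⟨sInf Jᶜ, ?_⟩
      ext i
      simp only [Set.mem_Iio]
      constructor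
      · intro hi
        by_contra hno
        push_neg at hno
        exact (Nat.sInf_mem hne) (hJdown _ i hno hi)
      · intro hi
        by_contra hno
        have := Nat.sInf_le (show i ∈ Jᶜ from hno)
        omega
    set ℓ₀ := (List.range j).map q with hℓ₀def
    have hℓ₀sorted : ℓ₀.Pairwise (· < ·) := by
      rw [hℓ₀def, List.pairwise_map]
      exact (List.pairwise_lt_range (n := j)).imp (fun h => hqmono h)
    have hℓ₀t : ℓ₀.toFinset = t := by
      apply Finset.coe_injective
      rw [List.coe_toFinset]
      ext n
      simp only [hℓ₀def, List.mem_map, List.mem_range, Finset.mem_coe]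
      constructor
      · rintro ⟨i, hij, rfl⟩
        have : i ∈ J := by rw [hJ]; exact hij
        exact this
      · intro hn
        obtain ⟨i, rfl⟩ := htS hn
        have : i ∈ J := hn
        rw [hJ] at this
        exact ⟨i, this, rfl⟩
    have hperm : List.Perm ℓ ℓ₀ :=
      List.perm_of_nodup_nodup_toFinset_eq hℓsorted.nodup hℓ₀sorted.nodup
        (hℓt.trans hℓ₀t.symm)
    have hℓeq : ℓ = ℓ₀ := hperm.eq_of_sortedLE hℓsorted.sortedLT.sortedLE hℓ₀sorted.sortedLT.sortedLE
    have hmem : AltInter A ℓ₀ ∈ x := by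
      apply altmem x A j q
      · intro i hi
        have := hqmem i
        rw [htargetdef] at this
        simp only [hi, if_pos] at this
        exact this.2
      · intro i hi
        have := hqmem i
        rw [htargetdef] at this
        have : q i ∈ τ' := by
          simpa [hi] using this
        exact (Ultrafilter.compl_mem_iff_notMem).mpr this.2
    rw [← hℓeq, hℓempty] at hmem
    exact Ultrafilter.empty_notMem hmem
  · -- independence case
    left
    haveI : Infinite ↥M := hMinf.to_subtype
    set u := Nat.orderEmbeddingOfSet M with hudef
    have humem : ∀ k, u k ∈ M := by
      intro k
      have h1 : u k ∈ Set.range u := ⟨k, rfl⟩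
      rwa [Nat.orderEmbeddingOfSet_range] at h1
    have humono : StrictMono u := u.strictMono
    set g : ℕ → ℕ := fun k => u (4 * k + 1) with hgdef
    have hgmono : StrictMono g := fun a b h => humono (by omega)
    refine ⟨Set.range g, Set.infinite_range_of_injective hgmono.injective, ?_⟩
    intro P M' hP hM' hdisj
    set idx : ℕ → ℕ := Function.invFun g with hidxdef
    have hidx : ∀ n, n ∈ Set.range g → g (idx n) = n := fun n hn => Function.invFun_eq hn
    set blk : ℕ → List ℕ := fun k =>
      if g k ∈ P then [u (4 * k + 1), u (4 * k + 2)] else [u (4 * k), u (4 * k + 1)] with hblkdef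
    have hblk_bounds : ∀ k z, z ∈ blk k → u (4 * k) ≤ z ∧ z ≤ u (4 * k + 2) := by
      intro k z hz
      rw [hblkdef] at hz
      dsimp only at hz
      split at hz <;> simp only [List.mem_cons, List.mem_singleton, List.not_mem_nil, or_false] at hz <;>
        rcases hz with rfl | rfl <;>
        exact ⟨humono.monotone (by omega), humono.monotone (by omega)⟩
    have hblk_memM : ∀ k z, z ∈ blk k → z ∈ M := by
      intro k z hz
      rw [hblkdef] at hz
      dsimp only at hz
      split at hz <;> simp only [List.mem_cons, List.mem_singleton, List.not_mem_nil, or_false] at hz <;>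
        rcases hz with rfl | rfl <;> exact humem _
    have hsortedBind : ∀ l : List ℕ, l.Pairwise (· < ·) → (l.flatMap blk).Pairwise (· < ·) := by
      intro l
      induction l with
      | nil => intro _; simp
      | cons k l ih =>
        intro hs
        rw [List.pairwise_cons] at hs
        rw [List.flatMap_cons, List.pairwise_append]
        refine ⟨?_, ih hs.2, ?_⟩
        · rw [hblkdef]
          dsimp only
          split <;>
          · refine List.pairwise_cons.mpr ⟨?_, by simp⟩
            intro z hz
            simp only [List.mem_cons, List.not_mem_nil, or_false] at hz
            subst hz
            exact humono (by omega)
        · intro a ha b hb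
          obtain ⟨k', hk'l, hbk'⟩ := List.mem_flatMap.mp hb
          have hkk' : k < k' := hs.1 k' hk'l
          have h1 := (hblk_bounds k a ha).2
          have h2 := (hblk_bounds k' b hbk').1
          have h3 : u (4 * k + 2) < u (4 * k') := humono (by omega)
          omega
    -- list of sorted block indices
    set KS := (P ∪ M').image idx with hKSdef
    set ks := KS.sort (· ≤ ·) with hksdef
    have hkssorted : ks.Pairwise (· < ·) := (Finset.sortedLT_sort KS).pairwise
    set ℓ := ks.flatMap blk with hℓdef
    have hℓsorted : ℓ.Pairwise (· < ·) := hsortedBind ks hkssorted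
    have hℓM : ∀ z ∈ ℓ, z ∈ M := by
      intro z hz
      obtain ⟨k, _, hzk⟩ := List.mem_flatMap.mp hz
      exact hblk_memM k z hzk
    have hne : AltInter A ℓ ≠ ∅ := by
      intro hempty
      refine hII ℓ.toFinset ?_ ⟨ℓ, hℓsorted, rfl, hempty⟩
      intro z hz
      rw [Finset.mem_coe, List.mem_toFinset] at hz
      exact hℓM z hz
    obtain ⟨z, hz⟩ := Set.nonempty_iff_ne_empty.mpr hne
    -- propagation
    have hprop : ∀ (l : List ℕ) (w : ℤ), w ∈ AltInter A (l.flatMap blk) →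
        ∀ k ∈ l, (g k ∈ P → w ∈ A (g k)) ∧ (g k ∉ P → w ∉ A (g k)) := by
      intro l
      induction l with
      | nil => intro w _ k hk; simp at hk
      | cons k₀ l ih =>
        intro w hw k hk
        rw [List.flatMap_cons] at hw
        by_cases hgk₀ : g k₀ ∈ P
        · have hblke : blk k₀ = [u (4 * k₀ + 1), u (4 * k₀ + 2)] := by
            rw [hblkdef]; simp [hgk₀]
          rw [hblke] at hw
          have hw' : w ∈ (A (u (4 * k₀ + 1)) ∩ (A (u (4 * k₀ + 2)))ᶜ) ∩
              AltInter A (l.flatMap blk) := hw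
          rcases List.mem_cons.mp hk with rfl | hkl
          · exact ⟨fun _ => hw'.1.1, fun hno => absurd hgk₀ hno⟩
          · exact ih w hw'.2 k hkl
        · have hblke : blk k₀ = [u (4 * k₀), u (4 * k₀ + 1)] := by
            rw [hblkdef]; simp [hgk₀]
          rw [hblke] at hw
          have hw' : w ∈ (A (u (4 * k₀)) ∩ (A (u (4 * k₀ + 1)))ᶜ) ∩
              AltInter A (l.flatMap blk) := hw
          rcases List.mem_cons.mp hk with rfl | hkl
          · exact ⟨fun hyes => absurd hyes hgk₀, fun _ => hw'.1.2⟩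
          · exact ih w hw'.2 k hkl
    have hmain := hprop ks z hz
    refine ⟨z, ?_, ?_⟩
    · rw [Set.mem_iInter₂]
      intro n hn
      have hnr : n ∈ Set.range g := hP hn
      have hks : idx n ∈ ks := by
        rw [hksdef, Finset.mem_sort, hKSdef]
        exact Finset.mem_image_of_mem idx (Finset.mem_union_left M' hn)
      have := (hmain (idx n) hks).1
      rw [hidx n hnr] at this
      exact this hn
    · rw [Set.mem_iInter₂]
      intro n hn
      have hnr : n ∈ Set.range g := hM' hn
      have hks : idx n ∈ ks := by
        rw [hksdef, Finset.mem_sort, hKSdef]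
        exact Finset.mem_image_of_mem idx (Finset.mem_union_right P hn)
      have := (hmain (idx n) hks).2
      rw [hidx n hnr] at this
      exact this (Finset.disjoint_right.mp hdisj hn)

end RosAux

namespace Stmt6Aux

variable {D : Set ℤ}

lemma shiftZ_comp (a b : ℤ) (ω : ℤ → Bool) : shiftZ a (shiftZ b ω) = shiftZ (b + a) ω := by
  funext i
  show ω (i + a + b) = ω (i + (b + a))
  congr 1; ring

lemma continuous_shiftZ (m : ℤ) : Continuous (shiftZ m) :=
  continuous_pi fun i => continuous_apply (i + m)

lemma shift_mem_XD (D : Set ℤ) (k : ℤ) : shiftZ k (chiD D) ∈ XD D :=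
  subset_closure ⟨k, rfl⟩

lemma isCompact_XD (D : Set ℤ) : IsCompact (XD D) :=
  isClosed_closure.isCompact

lemma mapsTo_shift (D : Set ℤ) (m : ℤ) : Set.MapsTo (shiftZ m) (XD D) (XD D) := by
  intro ω hω
  have h1 := image_closure_subset_closure_image (s := {ω | ∃ k : ℤ, ω = shiftZ k (chiD D)})
    (continuous_shiftZ m)
  have h2 : shiftZ m '' {ω | ∃ k : ℤ, ω = shiftZ k (chiD D)} ⊆
      {ω | ∃ k : ℤ, ω = shiftZ k (chiD D)} := by
    rintro _ ⟨_, ⟨k, rfl⟩, rfl⟩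
    exact ⟨k + m, shiftZ_comp m k (chiD D)⟩
  exact closure_mono h2 (h1 ⟨ω, hω, rfl⟩)

/-- uniform continuity on the compact set `XD D` -/
lemma unif_cont {f : (ℤ → Bool) → ℝ} (hf : ContinuousOn f (XD D)) {ε : ℝ} (hε : 0 < ε) :
    ∃ W : Finset ℤ, ∀ ω ∈ XD D, ∀ ω' ∈ XD D, (∀ w ∈ W, ω w = ω' w) → |f ω - f ω'| < ε := by
  -- for every ω there is a finite window cylinder inside which f varies < ε/2
  have key : ∀ ω ∈ XD D, ∃ F : Finset ℤ,
      ∀ ζ ∈ XD D, (∀ w ∈ F, ζ w = ω w) → |f ζ - f ω| < ε / 2 := by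
    intro ω hω
    have hcw : ContinuousWithinAt f (XD D) ω := hf ω hω
    have hball : f ⁻¹' Metric.ball (f ω) (ε / 2) ∈ nhdsWithin ω (XD D) :=
      hcw (Metric.ball_mem_nhds _ (by linarith))
    rw [mem_nhdsWithin] at hball
    obtain ⟨U, hUopen, hωU, hUsub⟩ := hball
    have hU : U ∈ nhds ω := hUopen.mem_nhds hωU
    rw [nhds_pi, Filter.mem_pi] at hU
    obtain ⟨I, hIfin, t, ht, hsub⟩ := hU
    refine ⟨hIfin.toFinset, fun ζ hζ hagree => ?_⟩
    have hζU : ζ ∈ U := by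
      apply hsub
      intro i hi
      have : ζ i = ω i := hagree i (hIfin.mem_toFinset.mpr hi)
      rw [this]
      have := ht i
      rwa [nhds_discrete, Filter.mem_pure] at this
    have := hUsub ⟨hζU, hζ⟩
    simpa [Real.dist_eq] using this
  choose! F hF using key
  -- cylinders as an open cover
  have hcover : XD D ⊆ ⋃ ω ∈ XD D, {ζ : ℤ → Bool | ∀ w ∈ F ω, ζ w = ω w} := by
    intro ω hω
    exact Set.mem_biUnion hω (fun w _ => rfl)
  have hopen : ∀ ω ∈ XD D, IsOpen {ζ : ℤ → Bool | ∀ w ∈ F ω, ζ w = ω w} := by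
    intro ω _
    have : {ζ : ℤ → Bool | ∀ w ∈ F ω, ζ w = ω w} = ⋂ w ∈ F ω, (fun ζ : ℤ → Bool => ζ w) ⁻¹' {ω w} := by
      ext ζ; simp
    rw [this]
    exact isOpen_biInter_finset fun w _ => (continuous_apply w).isOpen_preimage _ (isOpen_discrete _)
  obtain ⟨s, hs⟩ := (isCompact_XD D).elim_finite_subcover_image hopen hcover
  obtain ⟨hsXD, hsfin, hscov⟩ := hs
  refine ⟨hsfin.toFinset.sup F, fun ω hω ω' hω' hagree => ?_⟩
  obtain ⟨ω₀, hω₀s, hω₀⟩ := Set.mem_iUnion₂.mp (hscov hω)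
  have hFsub : F ω₀ ⊆ hsfin.toFinset.sup F :=
    Finset.le_sup (f := F) (hsfin.mem_toFinset.mpr hω₀s)
  have hω'mem : ∀ w ∈ F ω₀, ω' w = ω₀ w := by
    intro w hw
    rw [← hagree w (hFsub hw)]
    exact hω₀ w hw
  have h1 := hF ω₀ (hsXD hω₀s) ω hω hω₀
  have h2 := hF ω₀ (hsXD hω₀s) ω' hω' hω'mem
  calc |f ω - f ω'| ≤ |f ω - f ω₀| + |f ω₀ - f ω'| := abs_sub_le _ _ _
    _ < ε / 2 + ε / 2 := by rw [abs_sub_comm (f ω₀)] ; exact add_lt_add h1 h2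
    _ = ε := by ring

/-- from independence on the orbit closure, extract pattern realizations on the orbit itself -/
lemma orbit_pattern {f : (ℤ → Bool) → ℝ} (hf : ContinuousOn f (XD D)) {m : ℕ → ℤ} {a b : ℝ}
    (hind : ∀ P M : Finset ℕ, Disjoint P M →
      ((XD D ∩ ⋂ n ∈ P, {z | f (shiftZ (m n) z) < a}) ∩ ⋂ n ∈ M, {z | b < f (shiftZ (m n) z)}).Nonempty)
    (P M : Finset ℕ) (hPM : Disjoint P M) :
    ∃ k : ℤ, (∀ n ∈ P, f (shiftZ (m n + k) (chiD D)) < a) ∧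
      (∀ n ∈ M, b < f (shiftZ (m n + k) (chiD D))) := by
  obtain ⟨z, hz⟩ := hind P M hPM
  obtain ⟨⟨hzXD, hzP⟩, hzM⟩ := hz
  have hcwa : ∀ n : ℕ, ContinuousWithinAt (fun w => f (shiftZ (m n) w)) (XD D) z := by
    intro n
    exact (hf _ (mapsTo_shift D (m n) hzXD)).comp (continuous_shiftZ (m n)).continuousWithinAt
      (mapsTo_shift D (m n))
  have hS : ((⋂ n ∈ P, {w | f (shiftZ (m n) w) < a}) ∩ ⋂ n ∈ M, {w | b < f (shiftZ (m n) w)})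
      ∈ nhdsWithin z (XD D) := by
    apply Filter.inter_mem
    · rw [Filter.biInter_finset_mem]
      intro n hn
      have hlt : f (shiftZ (m n) z) < a := by
        have := Set.mem_iInter₂.mp hzP n hn; exact this
      exact (hcwa n) (Iio_mem_nhds hlt)
    · rw [Filter.biInter_finset_mem]
      intro n hn
      have hlt : b < f (shiftZ (m n) z) := Set.mem_iInter₂.mp hzM n hn
      exact (hcwa n) (Ioi_mem_nhds hlt)
  have hne : Filter.NeBot (nhdsWithin z {ω | ∃ k : ℤ, ω = shiftZ k (chiD D)}) :=
    mem_closure_iff_nhdsWithin_neBot.mp hzXD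
  have hmem : ((⋂ n ∈ P, {w | f (shiftZ (m n) w) < a}) ∩ ⋂ n ∈ M, {w | b < f (shiftZ (m n) w)})
      ∈ nhdsWithin z {ω | ∃ k : ℤ, ω = shiftZ k (chiD D)} :=
    nhdsWithin_mono z (fun ω hω => subset_closure hω) hS
  have horb : {ω | ∃ k : ℤ, ω = shiftZ k (chiD D)} ∈
      nhdsWithin z {ω | ∃ k : ℤ, ω = shiftZ k (chiD D)} := self_mem_nhdsWithin
  obtain ⟨w, hw1, hw2⟩ := hne.nonempty_of_mem (Filter.inter_mem hmem horb)
  obtain ⟨k, rfl⟩ := hw2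
  refine ⟨k, fun n hn => ?_, fun n hn => ?_⟩
  · have := Set.mem_iInter₂.mp hw1.1 n hn
    simpa [shiftZ_comp, add_comm] using this
  · have := Set.mem_iInter₂.mp hw1.2 n hn
    simpa [shiftZ_comp, add_comm] using this


lemma mem_image_translate (D : Set ℤ) (c z : ℤ) : z ∈ (fun d => c + d) '' D ↔ z - c ∈ D := by
  constructor
  · rintro ⟨d, hd, rfl⟩
    simpa using hd
  · intro h
    exact ⟨z - c, h, by ring⟩


lemma dir12 (D : Set ℤ)
    (h1 : ∀ f : (ℤ → Bool) → ℝ, ContinuousOn f (XD D) →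
      ¬ ∃ m : ℕ → ℤ, IsIndependentSeqOn (XD D) fun n ω => f (shiftZ (m n) ω)) :
    ∀ L : Set ℤ, L.Infinite → ∃ K ⊆ L, K.Infinite ∧
      ∃ Y : Set (Ultrafilter ℤ), Y.Countable ∧
        ∀ x : Ultrafilter ℤ, ∃ y ∈ Y, ∀ n ∈ K,
          ((fun d => n + d) '' D ∈ x ↔ (fun d => n + d) '' D ∈ y) := by
  intro L hL
  classical
  set e : ℕ → ℤ := fun n => (Set.Infinite.natEmbedding L hL n : ℤ) with hedef
  have heinj : Function.Injective e := fun a b h => (Set.Infinite.natEmbedding L hL).injective (Subtype.ext h)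
  have heL : ∀ n, e n ∈ L := fun n => (Set.Infinite.natEmbedding L hL n).2
  set A : ℕ → Set ℤ := fun n => (fun d => e n + d) '' D with hAdef
  rcases RosAux.rosenthal A with ⟨I, hIinf, hInd⟩ | ⟨I, hIinf, hConv⟩
  · -- independence contradicts tameness
    exfalso
    set v : ℕ → ℕ := fun j => (Set.Infinite.natEmbedding I hIinf j : ℕ) with hvdef
    have hvinj : Function.Injective v := fun a b h => (Set.Infinite.natEmbedding I hIinf).injective (Subtype.ext h)
    have hvI : ∀ j, v j ∈ I := fun j => (Set.Infinite.natEmbedding I hIinf j).2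
    set f : (ℤ → Bool) → ℝ := fun ω => if ω 0 then (1 : ℝ) else 0 with hfdef
    have hfc : Continuous f := by
      have hcomp : f = (fun t : Bool => if t then (1 : ℝ) else 0) ∘ (fun ω : ℤ → Bool => ω 0) := rfl
      rw [hcomp]
      exact (continuous_of_discreteTopology).comp (continuous_apply 0)
    apply h1 f hfc.continuousOn
    refine ⟨fun j => -(e (v j)), 1/3, 2/3, by norm_num, ?_⟩
    intro P M hPM
    have hsub1 : ↑(M.image v) ⊆ I := by
      intro i hi
      rw [Finset.coe_image] at hi
      obtain ⟨j, _, rfl⟩ := hi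
      exact hvI j
    have hsub2 : ↑(P.image v) ⊆ I := by
      intro i hi
      rw [Finset.coe_image] at hi
      obtain ⟨j, _, rfl⟩ := hi
      exact hvI j
    have hdisj : Disjoint (M.image v) (P.image v) :=
      (Finset.disjoint_image hvinj).mpr hPM.symm
    obtain ⟨z, hz1, hz2⟩ := hInd (M.image v) (P.image v) hsub1 hsub2 hdisj
    refine ⟨shiftZ z (chiD D), ⟨shift_mem_XD D z, ?_⟩, ?_⟩
    · rw [Set.mem_iInter₂]
      intro j hj
      have hzj : z ∉ A (v j) := by
        have := Set.mem_iInter₂.mp hz2 (v j) (Finset.mem_image_of_mem v hj)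
        exact this
      have hval : shiftZ (-(e (v j))) (shiftZ z (chiD D)) 0 = decide ((z - e (v j)) ∈ D) := by
        rw [shiftZ_comp]
        show chiD D (0 + (z + -e (v j))) = _
        have harg : 0 + (z + -e (v j)) = z - e (v j) := by ring
        rw [harg]; rfl
      have hnotD : (z - e (v j)) ∉ D := by
        intro hD
        exact hzj ((mem_image_translate D _ z).mpr hD)
      show f (shiftZ (-(e (v j))) (shiftZ z (chiD D))) < 1/3
      rw [hfdef]
      simp only [hval, hnotD, decide_eq_true_eq, if_neg]
      norm_num
    · rw [Set.mem_iInter₂]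
      intro j hj
      have hzj : z ∈ A (v j) := by
        have := Set.mem_iInter₂.mp hz1 (v j) (Finset.mem_image_of_mem v hj)
        exact this
      have hval : shiftZ (-(e (v j))) (shiftZ z (chiD D)) 0 = decide ((z - e (v j)) ∈ D) := by
        rw [shiftZ_comp]
        show chiD D (0 + (z + -e (v j))) = _
        have harg : 0 + (z + -e (v j)) = z - e (v j) := by ring
        rw [harg]; rfl
      have hD : (z - e (v j)) ∈ D := (mem_image_translate D _ z).mp hzj
      show (2:ℝ)/3 < f (shiftZ (-(e (v j))) (shiftZ z (chiD D)))
      rw [hfdef]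
      simp only [hval, hD, decide_eq_true_eq, if_pos]
      norm_num
  · -- convergence gives countable Y
    refine ⟨e '' I, ?_, hIinf.image (heinj.injOn), ?_⟩
    · rintro _ ⟨i, _, rfl⟩
      exact heL i
    set π : Ultrafilter ℤ → Set ℕ := fun x => {n | n ∈ I ∧ A n ∈ x} with hπdef
    set C : Set (Set ℕ) := Set.range π with hCdef
    have hCcnt : C.Countable := by
      have h1 : {T : Set ℕ | T.Finite}.Countable := by
        have := Set.countable_setOf_finite_subset (Set.countable_univ (α := ℕ))
        apply this.mono
        intro T hT
        exact ⟨hT, Set.subset_univ T⟩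
      have h2 : ((fun T => I \ T) '' {T : Set ℕ | T.Finite}).Countable := h1.image _
      apply (h1.union h2).mono
      rintro _ ⟨x, rfl⟩
      rcases hConv x with hfin | hfin
      · exact Or.inl hfin
      · refine Or.inr ⟨{n | n ∈ I ∧ A n ∉ x}, hfin, ?_⟩
        ext n
        simp only [Set.mem_diff, Set.mem_setOf_eq, hπdef]
        constructor
        · rintro ⟨hnI, hno⟩
          refine ⟨hnI, ?_⟩
          by_contra hnot
          exact hno ⟨hnI, hnot⟩
        · rintro ⟨hnI, hmem⟩
          exact ⟨hnI, fun hc => hc.2 hmem⟩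
    set ψ : Set ℕ → Ultrafilter ℤ := fun T =>
      if h : ∃ x : Ultrafilter ℤ, π x = T then h.choose else (pure 0 : Ultrafilter ℤ) with hψdef
    refine ⟨ψ '' C, hCcnt.image ψ, ?_⟩
    intro x
    refine ⟨ψ (π x), Set.mem_image_of_mem ψ ⟨x, rfl⟩, ?_⟩
    have hex : ∃ x' : Ultrafilter ℤ, π x' = π x := ⟨x, rfl⟩
    have hψx : π (ψ (π x)) = π x := by
      rw [hψdef]
      simp only [dif_pos hex]
      exact hex.choose_spec
    rintro _ ⟨i, hiI, rfl⟩
    have h1 : A i ∈ x ↔ i ∈ π x := by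
      simp only [hπdef, Set.mem_setOf_eq]
      exact ⟨fun h => ⟨hiI, h⟩, fun h => h.2⟩
    have h2 : A i ∈ ψ (π x) ↔ i ∈ π (ψ (π x)) := by
      simp only [hπdef, Set.mem_setOf_eq]
      exact ⟨fun h => ⟨hiI, h⟩, fun h => h.2⟩
    rw [show (fun d => e i + d) '' D = A i from rfl, h1, h2, hψx]


/-- trace -/
lemma trace_mem (D : Set ℤ) (x : Ultrafilter ℤ) (c : ℤ) (bb : Bool)
    (hbb : decide ((fun d => c + d) '' D ∈ x) = bb) : {k : ℤ | chiD D (k - c) = bb} ∈ x := by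
  by_cases hmem : (fun d => c + d) '' D ∈ x
  · have hbt : bb = true := by rw [← hbb]; exact decide_eq_true hmem
    have heq : {k : ℤ | chiD D (k - c) = bb} = (fun d => c + d) '' D := by
      ext k
      rw [Set.mem_setOf_eq, mem_image_translate D c k, hbt]
      show decide (k - c ∈ D) = true ↔ _
      rw [decide_eq_true_eq]
    rw [heq]
    exact hmem
  · have hbt : bb = false := by rw [← hbb]; exact decide_eq_false hmem
    have heq : {k : ℤ | chiD D (k - c) = bb} = ((fun d => c + d) '' D)ᶜ := by
      ext k
      rw [Set.mem_setOf_eq, Set.mem_compl_iff, mem_image_translate D c k, hbt]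
      show decide (k - c ∈ D) = false ↔ _
      rw [decide_eq_false_iff_not]
    rw [heq]
    exact (Ultrafilter.compl_mem_iff_notMem).mpr hmem


theorem dir21 (D : Set ℤ)
    (h2 : ∀ L : Set ℤ, L.Infinite → ∃ K ⊆ L, K.Infinite ∧
      ∃ Y : Set (Ultrafilter ℤ), Y.Countable ∧
        ∀ x : Ultrafilter ℤ, ∃ y ∈ Y, ∀ n ∈ K,
          ((fun d => n + d) '' D ∈ x ↔ (fun d => n + d) '' D ∈ y)) :
    ∀ f : (ℤ → Bool) → ℝ, ContinuousOn f (XD D) →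
      ¬ ∃ m : ℕ → ℤ, IsIndependentSeqOn (XD D) fun n ω => f (shiftZ (m n) ω) := by
  classical
  rintro f hf ⟨m, a, b, hab, hind⟩
  have hpat := orbit_pattern hf hind
  -- m is injective
  have hminj : Function.Injective m := by
    intro n n' hnn'
    by_contra hne
    obtain ⟨k, h1, h2⟩ := hpat {n} {n'} (by simp only [Finset.disjoint_singleton]; exact hne)
    have ha1 := h1 n (Finset.mem_singleton_self n)
    have hb1 := h2 n' (Finset.mem_singleton_self n')
    rw [hnn'] at ha1
    linarith
  obtain ⟨W, hW⟩ := unif_cont hf (show (0:ℝ) < b - a by linarith)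
  -- iterate (2) over the window W
  have iter : ∀ V : Finset ℤ, ∃ N : Set ℕ, N.Infinite ∧ ∃ 𝒱 : Set (ℕ → ℤ → Bool), 𝒱.Countable ∧
      ∀ x : Ultrafilter ℤ, ∃ v ∈ 𝒱, ∀ n ∈ N, ∀ w ∈ V,
        decide ((fun d => (-w - m n) + d) '' D ∈ x) = v n w := by
    intro V
    induction V using Finset.induction_on with
    | empty =>
      refine ⟨Set.univ, Set.infinite_univ, {fun _ _ => true}, Set.countable_singleton _,
        fun x => ⟨_, Set.mem_singleton _, fun n _ w hw => absurd hw (Finset.notMem_empty w)⟩⟩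
    | @insert w V hwV ih =>
      obtain ⟨N, hNinf, 𝒱, h𝒱c, h𝒱⟩ := ih
      set ee : ℕ → ℤ := fun n => -w - m n with heedef
      have heeinj : Function.Injective ee := by
        intro p q h
        apply hminj
        have h' : -w - m p = -w - m q := h
        omega
      have hLinf : (ee '' N).Infinite := hNinf.image heeinj.injOn
      obtain ⟨K, hKL, hKinf, Y, hYc, hY⟩ := h2 (ee '' N) hLinf
      set N' : Set ℕ := {n ∈ N | ee n ∈ K} with hN'def
      have hN'inf : N'.Infinite := by
        have hKr : K ⊆ ee '' N' := by
          intro k hk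
          obtain ⟨n, hnN, rfl⟩ := hKL hk
          exact ⟨n, ⟨hnN, hk⟩, rfl⟩
        by_contra hfin
        rw [Set.not_infinite] at hfin
        exact hKinf ((hfin.image ee).subset hKr)
      refine ⟨N', hN'inf, (fun p : Ultrafilter ℤ × (ℕ → ℤ → Bool) =>
        fun n w' => if w' = w then decide ((fun d => (-w - m n) + d) '' D ∈ p.1) else p.2 n w')
        '' (Y ×ˢ 𝒱), (hYc.prod h𝒱c).image _, ?_⟩
      intro x
      obtain ⟨y, hyY, hy⟩ := hY x
      obtain ⟨v, hv𝒱, hv⟩ := h𝒱 x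
      refine ⟨_, Set.mem_image_of_mem _ (Set.mk_mem_prod hyY hv𝒱), ?_⟩
      intro n hnN' w' hw'
      rcases Finset.mem_insert.mp hw' with rfl | hw'V
      · simp only [if_pos rfl]
        exact decide_eq_decide.mpr (hy (ee n) hnN'.2)
      · have hne : w' ≠ w := fun h => hwV (h ▸ hw'V)
        simp only [if_neg hne]
        exact hv n hnN'.1 w' hw'V
  obtain ⟨N, hNinf, 𝒱, h𝒱c, hmatch⟩ := iter W
  set g : ℤ → ℝ := fun k => f (shiftZ k (chiD D)) with hgdef
  set u : ℕ → ℕ := fun i => (Set.Infinite.natEmbedding N hNinf i : ℕ) with hudef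
  have huinj : Function.Injective u := fun p q h =>
    (Set.Infinite.natEmbedding N hNinf).injective (Subtype.ext h)
  have huN : ∀ i, u i ∈ N := fun i => (Set.Infinite.natEmbedding N hNinf i).2
  -- ultrafilters realizing independence patterns
  have hultra : ∀ S : Set ℕ, ∃ x : Ultrafilter ℤ,
      (∀ i, i ∈ S → {k | g (m (u i) + k) < a} ∈ x) ∧
      (∀ i, i ∉ S → {k | b < g (m (u i) + k)} ∈ x) := by
    intro S
    set CC : Finset ℕ → Finset ℕ → Set ℤ := fun P M =>
      {k | (∀ n ∈ P, g (m n + k) < a) ∧ ∀ n ∈ M, b < g (m n + k)} with hCCdef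
    set 𝒢 : Set (Set ℤ) := {c | ∃ P M : Finset ℕ,
      (∀ n ∈ P, ∃ i ∈ S, u i = n) ∧ (∀ n ∈ M, ∃ i ∉ S, u i = n) ∧ c = CC P M} with h𝒢def
    have hCCne : ∀ P M : Finset ℕ, (∀ n ∈ P, ∃ i ∈ S, u i = n) → (∀ n ∈ M, ∃ i ∉ S, u i = n) →
        (CC P M).Nonempty := by
      intro P M hP hM
      have hdisj : Disjoint P M := by
        rw [Finset.disjoint_left]
        intro n hnP hnM
        obtain ⟨i, hiS, rfl⟩ := hP n hnP
        obtain ⟨i', hi'S, hii'⟩ := hM (u i) hnM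
        exact hi'S (huinj hii' ▸ hiS)
      obtain ⟨k, hk1, hk2⟩ := hpat P M hdisj
      exact ⟨k, hk1, hk2⟩
    have haux : ∀ t : Set (Set ℤ), t.Finite → t ⊆ 𝒢 → ∃ P M : Finset ℕ,
        (∀ n ∈ P, ∃ i ∈ S, u i = n) ∧ (∀ n ∈ M, ∃ i ∉ S, u i = n) ∧ CC P M ⊆ ⋂₀ t := by
      intro t ht
      refine Set.Finite.induction_on t ht (fun _ => ⟨∅, ∅, by simp, by simp, by simp⟩) ?_
      intro c t hct htfin ih hsub
      obtain ⟨P₂, M₂, hP₂, hM₂, hsub₂⟩ := ih (fun c' hc' => hsub (Set.mem_insert_of_mem c hc'))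
      obtain ⟨P₁, M₁, hP₁, hM₁, rfl⟩ := hsub (Set.mem_insert c t)
      refine ⟨P₁ ∪ P₂, M₁ ∪ M₂, ?_, ?_, ?_⟩
      · intro n hn
        rcases Finset.mem_union.mp hn with h | h
        exacts [hP₁ n h, hP₂ n h]
      · intro n hn
        rcases Finset.mem_union.mp hn with h | h
        exacts [hM₁ n h, hM₂ n h]
      · intro k hk
        rw [Set.sInter_insert]
        refine ⟨⟨fun n hn => hk.1 n (Finset.mem_union_left _ hn),
          fun n hn => hk.2 n (Finset.mem_union_left _ hn)⟩, hsub₂ ?_⟩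
        exact ⟨fun n hn => hk.1 n (Finset.mem_union_right _ hn),
          fun n hn => hk.2 n (Finset.mem_union_right _ hn)⟩
    have hNeBot : (Filter.generate 𝒢).NeBot := by
      rw [Filter.generate_neBot_iff]
      intro t hsub htfin
      obtain ⟨P, M, hP, hM, hsubCC⟩ := haux t htfin hsub
      obtain ⟨k, hk⟩ := hCCne P M hP hM
      exact ⟨k, hsubCC hk⟩
    refine ⟨Ultrafilter.of (Filter.generate 𝒢), ?_, ?_⟩
    · intro i hiS
      have hmem : CC {u i} ∅ ∈ Filter.generate 𝒢 := by
        apply Filter.mem_generate_of_mem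
        exact ⟨{u i}, ∅, fun n hn => ⟨i, hiS, (Finset.mem_singleton.mp hn).symm⟩, by simp, rfl⟩
      have hmem2 : CC {u i} ∅ ∈ Ultrafilter.of (Filter.generate 𝒢) :=
        Ultrafilter.of_le (Filter.generate 𝒢) hmem
      apply Filter.mem_of_superset hmem2
      intro k hk
      exact hk.1 (u i) (Finset.mem_singleton_self _)
    · intro i hiS
      have hmem : CC ∅ {u i} ∈ Filter.generate 𝒢 := by
        apply Filter.mem_generate_of_mem
        exact ⟨∅, {u i}, by simp, fun n hn => ⟨i, hiS, (Finset.mem_singleton.mp hn).symm⟩, rfl⟩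
      have hmem2 : CC ∅ {u i} ∈ Ultrafilter.of (Filter.generate 𝒢) :=
        Ultrafilter.of_le (Filter.generate 𝒢) hmem
      apply Filter.mem_of_superset hmem2
      intro k hk
      exact hk.2 (u i) (Finset.mem_singleton_self _)
  choose xU hxU1 hxU2 using hultra
  choose vOf hvOf𝒱 hvOfeq using hmatch
  -- core contradiction
  have core : ∀ S1 S2 : Set ℕ, vOf (xU S1) = vOf (xU S2) → ∀ i, i ∈ S1 → i ∉ S2 → False := by
    intro S1 S2 hveq i hiS1 hiS2
    set n := u i with hndef
    have hnN : n ∈ N := huN i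
    -- x-side point k
    have hG : ({k | g (m n + k) < a} ∩ ⋂ w ∈ W, {k : ℤ | chiD D (k - (-w - m n)) = vOf (xU S1) n w})
        ∈ xU S1 := by
      refine Filter.inter_mem (hxU1 S1 i hiS1) ?_
      rw [Filter.biInter_finset_mem]
      intro w hw
      exact trace_mem D (xU S1) (-w - m n) _ (hvOfeq (xU S1) n hnN w hw)
    have hG' : ({k | b < g (m n + k)} ∩ ⋂ w ∈ W, {k : ℤ | chiD D (k - (-w - m n)) = vOf (xU S1) n w})
        ∈ xU S2 := by
      refine Filter.inter_mem (hxU2 S2 i hiS2) ?_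
      rw [Filter.biInter_finset_mem]
      intro w hw
      have := hvOfeq (xU S2) n hnN w hw
      rw [hveq] at *
      exact trace_mem D (xU S2) (-w - m n) _ this
    obtain ⟨k, hk1, hk2⟩ := (xU S1).nonempty_of_mem hG
    obtain ⟨k', hk'1, hk'2⟩ := (xU S2).nonempty_of_mem hG'
    set ζ := shiftZ (m n + k) (chiD D) with hζdef
    set ζ' := shiftZ (m n + k') (chiD D) with hζ'def
    have hagree : ∀ w ∈ W, ζ w = ζ' w := by
      intro w hw
      have e1 := Set.mem_iInter₂.mp hk2 w hw
      have e2 := Set.mem_iInter₂.mp hk'2 w hw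
      have harg1 : w + (m n + k) = k - (-w - m n) := by ring
      have harg2 : w + (m n + k') = k' - (-w - m n) := by ring
      show chiD D (w + (m n + k)) = chiD D (w + (m n + k'))
      rw [harg1, harg2, e1, e2]
    have habs := hW ζ (shift_mem_XD D _) ζ' (shift_mem_XD D _) hagree
    have hfa : f ζ < a := hk1
    have hfb : b < f ζ' := hk'1
    have : f ζ' - f ζ ≤ |f ζ - f ζ'| := by
      rw [abs_sub_comm]
      exact le_abs_self _
    linarith
  -- counting: two distinct S with the same matched trace function
  have hcnt : ∃ S S' : Set ℕ, S ≠ S' ∧ vOf (xU S) = vOf (xU S') := by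
    by_contra hno
    push_neg at hno
    have hinj : Function.Injective (fun S : Set ℕ => (⟨vOf (xU S), hvOf𝒱 (xU S)⟩ : ↥𝒱)) := by
      intro S S' h
      by_contra hne
      exact hno S S' hne (congrArg Subtype.val h)
    haveI : Countable ↥𝒱 := h𝒱c.to_subtype
    obtain ⟨fn, hfn⟩ := exists_injective_nat ↥𝒱
    exact Function.cantor_injective (fn ∘ fun S : Set ℕ => (⟨vOf (xU S), hvOf𝒱 (xU S)⟩ : ↥𝒱))
      (hfn.comp hinj)
  obtain ⟨S, S', hSS', hveq⟩ := hcnt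
  have hdiff : (∃ i, i ∈ S ∧ i ∉ S') ∨ (∃ i, i ∈ S' ∧ i ∉ S) := by
    by_contra h
    push_neg at h
    exact hSS' (Set.ext fun i => ⟨h.1 i, h.2 i⟩)
  rcases hdiff with ⟨i, hi1, hi2⟩ | ⟨i, hi1, hi2⟩
  · exact core S S' hveq i hi1 hi2
  · exact core S' S hveq.symm i hi1 hi2


end Stmt6Aux

theorem stmt6 (D : Set ℤ) :
    -- (1) the ℤ-system `X_D` is tame
    (∀ f : (ℤ → Bool) → ℝ, ContinuousOn f (XD D) →
      ¬ ∃ m : ℕ → ℤ, IsIndependentSeqOn (XD D) fun n ω => f (shiftZ (m n) ω)) ↔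
    -- (2) for every infinite `L ⊆ ℤ` there are an infinite `K ⊆ L` and a countable
    -- set `Y` of ultrafilters on `ℤ` such that every ultrafilter `x` on `ℤ` agrees with
    -- some `y ∈ Y` about membership of `n + D` for all `n ∈ K`
    (∀ L : Set ℤ, L.Infinite → ∃ K ⊆ L, K.Infinite ∧
      ∃ Y : Set (Ultrafilter ℤ), Y.Countable ∧
        ∀ x : Ultrafilter ℤ, ∃ y ∈ Y, ∀ n ∈ K,
          ((fun d => n + d) '' D ∈ x ↔ (fun d => n + d) '' D ∈ y)) := by
  constructor
  · intro h1
    exact Stmt6Aux.dir12 D h1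
  · intro h2
    exact Stmt6Aux.dir21 D h2
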